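/- For a matroid M on ground set E and any Y ⊆ E, the rank of Y equals min over cyclic flats Z of M of r(Z) + |Y \ Z|. -/

import Mathlib

open Set

variable {α : Type*}

/-- A circuit of a matroid: a minimal dependent set. -/
def Matroid.IsCircuit' (M : Matroid α) (C : Set α) : Prop :=
  M.Dep C ∧ ∀ D ⊂ C, ¬ M.Dep D

/-- A cyclic flat: a flat that is a union of circuits. -/
def Matroid.CyclicFlat (M : Matroid α) (Z : Set α) : Prop :=
  M.IsFlat Z ∧ ∀ e ∈ Z, ∃ C, M.IsCircuit' C ∧ C ⊆ Z ∧ e ∈ C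

/-- The rank of a set: the largest cardinality of an independent subset. -/
noncomputable def Matroid.rank' (M : Matroid α) (Y : Set α) : ℕ :=
  sSup (Set.ncard '' {I : Set α | M.Indep I ∧ I ⊆ Y})

private lemma ncard_le_of_indep_basis {M : Matroid α} [M.Finite] {J I X : Set α}
    (hJ : M.Indep J) (hJX : J ⊆ X) (hI : M.IsBasis I X) : J.ncard ≤ I.ncard := by
  obtain ⟨J', hJ', hJJ'⟩ := hJ.subset_isBasis_of_subset hJX hI.subset_ground
  have h1 : J.ncard ≤ J'.ncard :=
    Set.ncard_le_ncard hJJ' (M.set_finite J' hJ'.indep.subset_ground)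
  have h2 : J'.ncard = I.ncard := by
    rw [Set.ncard_def, Set.ncard_def, hJ'.encard_eq_encard hI]
  omega

private lemma rank'_eq_ncard_basis {M : Matroid α} [M.Finite] {I X : Set α}
    (hI : M.IsBasis I X) : M.rank' X = I.ncard := by
  have hmem : I.ncard ∈ Set.ncard '' {J : Set α | M.Indep J ∧ J ⊆ X} :=
    ⟨I, ⟨hI.indep, hI.subset⟩, rfl⟩
  have hub : ∀ n ∈ Set.ncard '' {J : Set α | M.Indep J ∧ J ⊆ X}, n ≤ I.ncard := by
    rintro n ⟨J, ⟨hJi, hJX⟩, rfl⟩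
    exact ncard_le_of_indep_basis hJi hJX hI
  exact le_antisymm (csSup_le ⟨_, hmem⟩ hub) (le_csSup ⟨I.ncard, hub⟩ hmem)

private lemma exists_circuit_subset (M : Matroid α) [M.Finite] :
    ∀ n (D : Set α), D.ncard ≤ n → M.Dep D → ∃ C, C ⊆ D ∧ M.IsCircuit' C := by
  intro n
  induction n with
  | zero =>
    intro D hcard hD
    have hfin : D.Finite := M.set_finite D hD.subset_ground
    have hD0 : D = ∅ := by
      rw [← Set.ncard_eq_zero hfin]; omega
    exact absurd M.empty_indep (hD0 ▸ hD).not_indep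
  | succ n ih =>
    intro D hcard hD
    by_cases h : ∀ D' ⊂ D, ¬ M.Dep D'
    · exact ⟨D, Subset.rfl, hD, h⟩
    push_neg at h
    obtain ⟨D', hss, hD'⟩ := h
    have hfin : D.Finite := M.set_finite D hD.subset_ground
    obtain ⟨C, hCD', hC⟩ := ih D' (by have := Set.ncard_lt_ncard hss hfin; omega) hD'
    exact ⟨C, hCD'.trans hss.subset, hC⟩

private lemma flat_of_closure_subset {M : Matroid α} {X : Set α} (hXE : X ⊆ M.E)
    (h : M.closure X ⊆ X) : M.IsFlat X :=
  ⟨fun _ X' hI hIX' =>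
    hIX'.subset_closure.trans (by rw [hI.closure_eq_closure]; exact h), hXE⟩

/-- The rank of `Y` is `min { r Z + |Y \ Z| : Z a cyclic flat of M }`. -/
theorem rank_eq_min_over_cyclicFlats (M : Matroid α) [M.Finite]
    (Y : Set α) (hY : Y ⊆ M.E) :
    (∀ Z, M.CyclicFlat Z → M.rank' Y ≤ M.rank' Z + (Y \ Z).ncard) ∧
      ∃ Z, M.CyclicFlat Z ∧ M.rank' Y = M.rank' Z + (Y \ Z).ncard := by
  classical
  have part1 : ∀ Z, M.CyclicFlat Z → M.rank' Y ≤ M.rank' Z + (Y \ Z).ncard := by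
    intro Z hZ
    have hZE : Z ⊆ M.E := hZ.1.subset_ground
    obtain ⟨I, hI⟩ := M.exists_isBasis Y hY
    obtain ⟨K, hK⟩ := M.exists_isBasis Z hZE
    rw [rank'_eq_ncard_basis hI, rank'_eq_ncard_basis hK]
    have hIfin : I.Finite := M.set_finite I hI.indep.subset_ground
    have hsplit : (I ∩ Z).ncard + (I \ Z).ncard = I.ncard :=
      Set.ncard_inter_add_ncard_diff_eq_ncard I Z hIfin
    have h1 : (I ∩ Z).ncard ≤ K.ncard :=
      ncard_le_of_indep_basis (hI.indep.subset inter_subset_left) inter_subset_right hK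
    have h2 : (I \ Z).ncard ≤ (Y \ Z).ncard :=
      Set.ncard_le_ncard (diff_subset_diff_left hI.subset)
        (M.set_finite _ (diff_subset.trans hY))
    omega
  refine ⟨part1, ?_⟩
  set F := M.closure Y with hFdef
  have hFE : F ⊆ M.E := M.closure_subset_ground Y
  have hYF : Y ⊆ F := M.subset_closure Y hY
  have hclF : M.closure F = F := M.closure_closure Y
  set D := {e | e ∈ F ∧ e ∉ M.closure (F \ {e})} with hDdef
  set Z := F \ D with hZdef
  have hZF : Z ⊆ F := diff_subset
  have hZE : Z ⊆ M.E := hZF.trans hFE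
  have hDF : D ⊆ F := fun e he => he.1
  have hDE : D ⊆ M.E := hDF.trans hFE
  have hDY : D ⊆ Y := by
    intro e he
    by_contra heY
    have hYsub : Y ⊆ F \ {e} := subset_diff_singleton hYF heY
    exact he.2 (M.closure_subset_closure hYsub he.1)
  -- Z is a flat
  have hZflat : M.IsFlat Z := by
    refine flat_of_closure_subset hZE ?_
    intro e he
    have heF : e ∈ F := by
      have h1 : M.closure Z ⊆ F := by
        have h2 := M.closure_subset_closure hZF
        rwa [hclF] at h2
      exact h1 he
    refine ⟨heF, fun heD => ?_⟩
    have hZsub : Z ⊆ F \ {e} := fun z hz =>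
      ⟨hz.1, fun h => hz.2 (mem_singleton_iff.1 h ▸ heD)⟩
    exact heD.2 (M.closure_subset_closure hZsub he)
  -- Z is cyclic
  have hZcyc : M.CyclicFlat Z := by
    refine ⟨hZflat, fun e he => ?_⟩
    have heF : e ∈ F := he.1
    have hecl : e ∈ M.closure (F \ {e}) := by
      by_contra h
      exact he.2 ⟨heF, h⟩
    obtain ⟨I, hI⟩ := M.exists_isBasis (F \ {e}) (diff_subset.trans hFE)
    have heclI : e ∈ M.closure I := by rwa [hI.closure_eq_closure]
    have heI : e ∉ I := fun h => (hI.subset h).2 rfl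
    have hdep : M.Dep (insert e I) := hI.indep.insert_dep_iff.mpr ⟨heclI, heI⟩
    obtain ⟨C, hCsub, hCcirc⟩ :=
      exists_circuit_subset M (insert e I).ncard (insert e I) le_rfl hdep
    have heC : e ∈ C := by
      by_contra hec
      have hCI : C ⊆ I := (subset_insert_iff_of_notMem hec).1 hCsub
      exact hCcirc.1.not_indep (hI.indep.subset hCI)
    have hCF : C ⊆ F := hCsub.trans (insert_subset heF (hI.subset.trans diff_subset))
    refine ⟨C, hCcirc, fun f hf => ⟨hCF hf, fun hfD => ?_⟩, heC⟩
    -- f ∈ D leads to contradiction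
    have hCfindep : M.Indep (C \ {f}) := by
      have hnd := hCcirc.2 (C \ {f}) (sdiff_singleton_ssubset.2 hf)
      exact (M.not_dep_iff ((diff_subset.trans hCF).trans hFE)).1 hnd
    have hCdep : M.Dep (insert f (C \ {f})) := by
      rw [insert_diff_singleton, insert_eq_self.2 hf]
      exact hCcirc.1
    have hfcl : f ∈ M.closure (C \ {f}) :=
      (hCfindep.insert_dep_iff.1 hCdep).1
    have hsub : C \ {f} ⊆ F \ {f} := diff_subset_diff_left hCF
    exact hfD.2 (M.closure_subset_closure hsub hfcl)
  -- the equality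
  obtain ⟨I, hI⟩ := M.exists_isBasis Y hY
  obtain ⟨K, hK⟩ := M.exists_isBasis Z hZE
  have hIF : M.IsBasis I F := hI.isBasis_closure_right
  have hDfin : D.Finite := M.set_finite D hDE
  have hKZ : K ⊆ Z := hK.subset
  have hKD : Disjoint K D := disjoint_left.2 fun a haK haD => (hKZ haK).2 haD
  -- K ∪ D is independent
  have hKDindep : M.Indep (K ∪ D) := by
    refine Set.Finite.induction_on_subset (motive := fun s _ => M.Indep (K ∪ s)) D hDfin
      (by simpa using hK.indep) ?_
    intro a t haD htD hat hIH
    have haKt : a ∉ K ∪ t := by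
      rintro (h | h)
      · exact (hKZ h).2 haD
      · exact hat h
    have hsubF : K ∪ t ⊆ F \ {a} := by
      rintro x (hx | hx)
      · exact ⟨hZF (hKZ hx), fun h => haKt (Or.inl (mem_singleton_iff.1 h ▸ hx))⟩
      · exact ⟨hDF (htD hx), fun h => haKt (Or.inr (mem_singleton_iff.1 h ▸ hx))⟩
    have hacl : a ∉ M.closure (K ∪ t) :=
      fun h => haD.2 (M.closure_subset_closure hsubF h)
    rw [union_insert]
    exact (hIH.insert_indep_iff_of_notMem haKt).2 ⟨hDE haD, hacl⟩
  have hKDsub : K ∪ D ⊆ F := union_subset (hKZ.trans hZF) hDF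
  have hle : (K ∪ D).ncard ≤ I.ncard := ncard_le_of_indep_basis hKDindep hKDsub hIF
  have hKfin : K.Finite := M.set_finite K hK.indep.subset_ground
  have hunion : (K ∪ D).ncard = K.ncard + D.ncard := Set.ncard_union_eq hKD hKfin hDfin
  have hYZ : Y \ Z = D := by
    ext e
    simp only [hZdef, mem_diff, not_and, not_not]
    constructor
    · rintro ⟨heY, h⟩
      exact h (hYF heY)
    · intro heD
      exact ⟨hDY heD, fun _ => heD⟩
  refine ⟨Z, hZcyc, ?_⟩
  rw [rank'_eq_ncard_basis hI, rank'_eq_ncard_basis hK, hYZ]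
  have hge := part1 Z hZcyc
  rw [rank'_eq_ncard_basis hI, rank'_eq_ncard_basis hK, hYZ] at hge
  omega
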